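/- Let X be a closed subset of a metric space M and let S be a subset of M∖X that is closed in the subspace M∖X. Then there exists a compact subset K of M with S = K∖X (equivalently, the closure of S in M is compact) if and only if S ∩ F is compact for every subset F ⊆ M∖X that is closed in M. -/

import Mathlib

open Filter Topology

/-- A point in the closure of the range of a sequence that is not in the range
is a cluster point of the sequence. -/
lemma aux_mapClusterPt {M : Type*} [MetricSpace M] {u : ℕ → M} {a : M}
    (ha : a ∈ closure (Set.range u)) (ha' : a ∉ Set.range u) :
    MapClusterPt a atTop u := by
  rw [mapClusterPt_iff_frequently]
  intro s hs
  rcases Metric.mem_nhds_iff.1 hs with ⟨ε, hε, hεs⟩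
  rw [frequently_atTop]
  intro N
  by_contra hcon
  push_neg at hcon
  -- finite set of candidate radii
  set t : Finset ℝ := insert ε ((Finset.range N).image fun n => dist a (u n)) with ht
  have htne : t.Nonempty := ⟨ε, Finset.mem_insert_self _ _⟩
  have hpos : 0 < t.min' htne := by
    apply lt_of_le_of_ne
    · apply Finset.le_min'
      intro y hy
      rcases Finset.mem_insert.1 hy with rfl | hy
      · exact hε.le
      · rcases Finset.mem_image.1 hy with ⟨n, _, rfl⟩
        exact dist_nonneg
    · intro h0
      have := t.min'_mem htne
      rw [← h0] at this
      rcases Finset.mem_insert.1 this with h | h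
      · exact hε.ne h
      · rcases Finset.mem_image.1 h with ⟨n, _, hn⟩
        exact ha' ⟨n, (dist_eq_zero.1 hn).symm⟩
  rcases Metric.mem_closure_iff.1 ha _ hpos with ⟨b, ⟨m, rfl⟩, hb⟩
  have hmN : N ≤ m := by
    by_contra hm
    push_neg at hm
    have : dist a (u m) ∈ t :=
      Finset.mem_insert_of_mem (Finset.mem_image.2 ⟨m, Finset.mem_range.2 hm, rfl⟩)
    exact absurd (Finset.min'_le _ _ this) (not_le.2 hb)
  have hε' : t.min' htne ≤ ε := Finset.min'_le _ _ (Finset.mem_insert_self _ _)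
  exact hcon m hmN (hεs (by
    rw [Metric.mem_ball, dist_comm]
    exact lt_of_lt_of_le hb hε'))

/-- Key step: under the right-hand side hypothesis, every sequence in `S` has a
subsequence converging in `M`. -/
lemma aux_subseq {M : Type*} [MetricSpace M] {X S : Set M} (hS : S ⊆ Xᶜ)
    (h : ∀ F : Set M, F ⊆ Xᶜ → IsClosed F → IsCompact (S ∩ F))
    (u : ℕ → M) (hu : ∀ n, u n ∈ S) :
    ∃ a ∈ closure S, ∃ φ : ℕ → ℕ, StrictMono φ ∧ Tendsto (u ∘ φ) atTop (𝓝 a) := by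
  by_cases hcl : closure (Set.range u) ⊆ Set.range u
  · -- the range is closed; apply the hypothesis
    have hclosed : IsClosed (Set.range u) := isClosed_of_closure_subset hcl
    have hsub : Set.range u ⊆ Xᶜ := by
      rintro x ⟨n, rfl⟩; exact hS (hu n)
    have hcpt := h _ hsub hclosed
    rcases hcpt.tendsto_subseq (x := u) (fun n => ⟨hu n, ⟨n, rfl⟩⟩) with ⟨a, ha, φ, hφ, hlim⟩
    exact ⟨a, subset_closure ha.1, φ, hφ, hlim⟩
  · rcases Set.not_subset.1 hcl with ⟨a, ha, ha'⟩
    have hmc := aux_mapClusterPt ha ha'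
    rcases TopologicalSpace.FirstCountableTopology.tendsto_subseq hmc with ⟨φ, hφ, hlim⟩
    have : a ∈ closure S := closure_mono (Set.range_subset_iff.2 hu) ha
    exact ⟨a, this, φ, hφ, hlim⟩

theorem stmt1 {M : Type*} [MetricSpace M] (X S : Set M) (hX : IsClosed X)
    (hS : S ⊆ Xᶜ) (hS' : IsClosed (Subtype.val ⁻¹' S : Set (Xᶜ : Set M))) :
    (∃ K : Set M, IsCompact K ∧ S = K \ X) ↔
      ∀ F : Set M, F ⊆ Xᶜ → IsClosed F → IsCompact (S ∩ F) := by
  constructor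
  · rintro ⟨K, hK, rfl⟩ F hF hFc
    have : (K \ X) ∩ F = K ∩ F := by
      ext x
      constructor
      · rintro ⟨⟨hxK, _⟩, hxF⟩; exact ⟨hxK, hxF⟩
      · rintro ⟨hxK, hxF⟩; exact ⟨⟨hxK, hF hxF⟩, hxF⟩
    rw [this]
    exact hK.inter_right hFc
  · intro h
    refine ⟨closure S, ?_, ?_⟩
    · -- closure of S is compact, via sequential compactness
      apply IsSeqCompact.isCompact
      intro u hu
      -- approximate u by a sequence in S
      have hex : ∀ n : ℕ, ∃ b ∈ S, dist (u n) b < 1 / (n + 1) := by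
        intro n
        exact Metric.mem_closure_iff.1 (hu n) _ (by positivity)
      choose v hv hvd using hex
      rcases aux_subseq hS h v hv with ⟨a, haS, φ, hφ, hlim⟩
      refine ⟨a, haS, φ, hφ, ?_⟩
      have hd0 : Tendsto (fun n => dist (u (φ n)) (v (φ n))) atTop (𝓝 0) := by
        have hle : ∀ n : ℕ, dist (u (φ n)) (v (φ n)) ≤ 1 / (n + 1) := by
          intro n
          refine le_trans (hvd (φ n)).le ?_
          apply div_le_div_of_nonneg_left one_pos.le (by positivity)
          have := hφ.le_apply (x := n)
          have h2 : (n : ℝ) ≤ (φ n : ℝ) := by exact_mod_cast this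
          push_cast
          linarith
        exact squeeze_zero (fun n => dist_nonneg) hle tendsto_one_div_add_atTop_nhds_zero_nat
      have : Tendsto (fun n => dist ((u ∘ φ) n) a) atTop (𝓝 0) := by
        have hsum : Tendsto (fun n => dist (u (φ n)) (v (φ n)) + dist (v (φ n)) a)
            atTop (𝓝 0) := by
          have h2 : Tendsto (fun n => dist (v (φ n)) a) atTop (𝓝 0) := by
            rw [← tendsto_iff_dist_tendsto_zero] at *
            exact hlim
          simpa using hd0.add h2
        refine squeeze_zero (fun n => dist_nonneg) (fun n => ?_) hsum
        exact dist_triangle _ _ _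
      rwa [tendsto_iff_dist_tendsto_zero]
    · -- S = closure S \ X
      rcases isClosed_induced_iff.1 hS' with ⟨C, hC, hCS⟩
      have hmem : ∀ x (hx : x ∈ Xᶜ), x ∈ C ↔ x ∈ S := by
        intro x hx
        constructor
        · intro hxC
          have : (⟨x, hx⟩ : (Xᶜ : Set M)) ∈ (Subtype.val ⁻¹' C : Set (Xᶜ : Set M)) := hxC
          rw [hCS] at this
          exact this
        · intro hxS
          have : (⟨x, hx⟩ : (Xᶜ : Set M)) ∈ (Subtype.val ⁻¹' S : Set (Xᶜ : Set M)) := hxS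
          rw [← hCS] at this
          exact this
      have hSC : S ⊆ C := fun x hx => (hmem x (hS hx)).2 hx
      ext x
      constructor
      · intro hx
        exact ⟨subset_closure hx, hS hx⟩
      · rintro ⟨hx1, hx2⟩
        have hxC : x ∈ C := (hC.closure_subset_iff.2 hSC) hx1
        exact (hmem x hx2).1 hxC
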